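/- Let A be a k-algebra that is a domain, and suppose A is left integral over u_good(A), i.e., for every f ∈ A there exist n ≥ 0 and elements d_0, …, d_n ∈ u_good(A), not all zero, such that Σ_{s=0}^{n} d_s f^s = 0. Then u_good(A) = A; equivalently, the only good ℕ-filtration of A is the trivial one with F_0 = A. (Proposition 1.3.) -/

import Mathlib

open scoped TensorProduct ENNReal

universe u v

variable (k : Type v) [Field k]

/-- An ℕ-filtration of a `k`-algebra `A`: an ascending chain of `k`-subspaces
`F 0 ⊆ F 1 ⊆ ⋯` with `k·1 ⊆ F 0`, `⋃ᵢ F i = A` and `F i * F j ⊆ F (i + j)`. -/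
structure AlgFiltration (A : Type u) [Ring A] [Algebra k A] where
  F : ℕ → Submodule k A
  one_mem : (1 : A) ∈ F 0
  mono : ∀ i, F i ≤ F (i + 1)
  exhaustive : ∀ a : A, ∃ i, a ∈ F i
  mul_mem : ∀ i j : ℕ, ∀ x ∈ F i, ∀ y ∈ F j, x * y ∈ F (i + j)

namespace AlgFiltration

variable {k} {A : Type u} [Ring A] [Algebra k A] (𝓕 : AlgFiltration k A)

/-- The Rees algebra `⊕ᵢ (F i) Xⁱ ⊆ A[X]` of a filtration. -/
def rees : Subalgebra k (Polynomial A) where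
  carrier := {p | ∀ i, p.coeff i ∈ 𝓕.F i}
  add_mem' := fun hp hq i => by
    simpa using (𝓕.F i).add_mem (hp i) (hq i)
  mul_mem' := fun {p q} hp hq i => by
    show (p * q).coeff i ∈ 𝓕.F i
    rw [Polynomial.coeff_mul]
    refine Submodule.sum_mem _ fun x hx => ?_
    have h := 𝓕.mul_mem x.1 x.2 _ (hp x.1) _ (hq x.2)
    rwa [show x.1 + x.2 = i by simpa using hx] at h
  algebraMap_mem' := fun c i => by
    rcases i with _ | i
    · simpa [Polynomial.algebraMap_apply, Algebra.algebraMap_eq_smul_one] using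
        (𝓕.F 0).smul_mem c 𝓕.one_mem
    · simp [Polynomial.algebraMap_apply]

/-- The element `X` of the Rees algebra. -/
noncomputable def xElem : 𝓕.rees :=
  ⟨Polynomial.X, fun i => by
    rcases i with _ | _ | i
    · simp
    · simpa [Polynomial.coeff_X] using 𝓕.mono 0 𝓕.one_mem
    · simp [Polynomial.coeff_X]⟩

/-- The associated graded algebra `gr_F(A) = ⊕ᵢ F i / F (i-1)` of a filtration, realized as
the Rees algebra modulo the two-sided ideal generated by the central element `X`. -/
def gr : Type u := RingQuot (fun a b : 𝓕.rees => a = 𝓕.xElem ∧ b = 0)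

noncomputable instance : Ring 𝓕.gr :=
  inferInstanceAs (Ring (RingQuot (fun a b : 𝓕.rees => a = 𝓕.xElem ∧ b = 0)))

noncomputable instance : Algebra k 𝓕.gr :=
  inferInstanceAs (Algebra k (RingQuot (fun a b : 𝓕.rees => a = 𝓕.xElem ∧ b = 0)))

/-- The `k`-linear map sending `a ∈ F i` to the monomial `a Xⁱ` in the Rees algebra. -/
noncomputable def monoMap (i : ℕ) : 𝓕.F i →ₗ[k] 𝓕.rees where
  toFun a :=
    ⟨Polynomial.monomial i (a : A), fun j => by
      rcases eq_or_ne j i with rfl | h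
      · simp only [Polynomial.coeff_monomial, if_pos rfl]
        exact a.2
      · simp [Polynomial.coeff_monomial, h, Ne.symm h]⟩
  map_add' a b := by
    ext
    simp
  map_smul' c a := by
    ext
    simp

/-- The canonical projection from the Rees algebra onto the associated graded algebra. -/
noncomputable def grProj : 𝓕.rees →ₐ[k] 𝓕.gr :=
  RingQuot.mkAlgHom k (fun a b : 𝓕.rees => a = 𝓕.xElem ∧ b = 0)

/-- The degree-`i` homogeneous component `F i / F (i-1)` of the associated graded algebra,
realized as the image of `(F i) Xⁱ` under the projection. -/
noncomputable def grPiece (i : ℕ) : Submodule k 𝓕.gr :=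
  LinearMap.range (𝓕.grProj.toLinearMap ∘ₗ 𝓕.monoMap i)

end AlgFiltration

/-- A `k`-algebra `A` is a firm domain if `A ⊗[k] B` is a domain for every `k`-algebra `B`
which is a domain. -/
def IsFirmDomain (A : Type u) [Ring A] [Algebra k A] : Prop :=
  ∀ (B : Type u) [Ring B] [Algebra k B], IsDomain B → IsDomain (A ⊗[k] B)

/-- A filtration is good if its associated graded algebra is a domain.
`uGood k A` is the subspace of universally degree-`0` elements with respect to good
ℕ-filtrations: the intersection of `F 0` over all good ℕ-filtrations of `A`. -/
noncomputable def uGood (A : Type u) [Ring A] [Algebra k A] : Submodule k A :=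
  ⨅ (𝓕 : AlgFiltration k A) (_ : IsDomain 𝓕.gr), 𝓕.F 0

/-- A filtration is firm if its associated graded algebra is a firm domain.
`uFirm k A` is the intersection of `F 0` over all firm ℕ-filtrations of `A`. -/
noncomputable def uFirm (A : Type u) [Ring A] [Algebra k A] : Submodule k A :=
  ⨅ (𝓕 : AlgFiltration k A) (_ : IsFirmDomain k 𝓕.gr), 𝓕.F 0

/-- The Gelfand–Kirillov dimension of a `k`-algebra `A`: the supremum, over all
finite-dimensional subspaces `V ⊆ A` containing `1`, of `limsup_n log(dim Vⁿ)/log n`. -/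
noncomputable def GKdim (A : Type u) [Ring A] [Algebra k A] : ℝ≥0∞ :=
  ⨆ (V : Submodule k A) (_ : (1 : A) ∈ V) (_ : FiniteDimensional k V),
    Filter.limsup
      (fun n : ℕ => ENNReal.ofReal (Real.log (Module.finrank k ↥(V ^ n)) / Real.log n))
      Filter.atTop

/-- `R` is GKdim-additive if it has finite GK-dimension and
`GKdim (A ⊗ R) = GKdim A + GKdim R` for every `k`-algebra `A`. -/
def IsGKAdditive (R : Type u) [Ring R] [Algebra k R] : Prop :=
  GKdim k R < ⊤ ∧
    ∀ (A : Type u) [Ring A] [Algebra k A], GKdim k (A ⊗[k] R) = GKdim k A + GKdim k R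

/-- Membership in the family `𝓡₁` of GKdim-additive firm domains `R` with `u_firm(R) = k·1`. -/
def InR1 (R : Type u) [Ring R] [Algebra k R] : Prop :=
  IsGKAdditive k R ∧ IsFirmDomain k R ∧ uFirm k R = 1

/-- Membership in the family `𝓡₂` of GKdim-additive domains `R` with `u_good(R) = k·1`. -/
def InR2 (R : Type u) [Ring R] [Algebra k R] : Prop :=
  IsGKAdditive k R ∧ IsDomain R ∧ uGood k R = 1

/-- The canonical image of `P ⊗ Q` in `M ⊗[k] N`, for subspaces `P ⊆ M` and `Q ⊆ N`. -/
def tensorSub {M N : Type u} [Ring M] [Ring N] [Algebra k M] [Algebra k N]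
    (P : Submodule k M) (Q : Submodule k N) : Submodule k (M ⊗[k] N) :=
  Submodule.span k {z | ∃ x ∈ P, ∃ y ∈ Q, z = x ⊗ₜ[k] y}

section Prop13Aux

namespace AlgFiltration

variable {k} {A : Type u} [Ring A] [Algebra k A] (𝓕 : AlgFiltration k A)

theorem F_le {i j : ℕ} (h : i ≤ j) : 𝓕.F i ≤ 𝓕.F j :=
  monotone_nat_of_le_succ 𝓕.mono h

theorem pow_mem_F {f : A} {m : ℕ} (hf : f ∈ 𝓕.F m) (s : ℕ) : f ^ s ∈ 𝓕.F (s * m) := by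
  induction s with
  | zero => simpa using 𝓕.one_mem
  | succ s ih =>
      have h := 𝓕.mul_mem (s * m) m _ ih _ hf
      rw [pow_succ, Nat.succ_mul]
      exact h

theorem monoMap_coe (i : ℕ) (x : 𝓕.F i) :
    ((𝓕.monoMap i x : 𝓕.rees) : Polynomial A) = Polynomial.monomial i (x : A) := rfl

/-- The submodule of "positive" elements of `A[X]`: constant coefficient `0` and
coefficient of `X^(j+1)` lying in `F j`. This is the kernel of the projection onto `gr`. -/
def Spos : Submodule k (Polynomial A) where
  carrier := {p | p.coeff 0 = 0 ∧ ∀ j : ℕ, p.coeff (j + 1) ∈ 𝓕.F j}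
  add_mem' := fun {p q} hp hq => ⟨by simp [hp.1, hq.1], fun j => by
    simpa using (𝓕.F j).add_mem (hp.2 j) (hq.2 j)⟩
  zero_mem' := ⟨by simp, fun j => by simp⟩
  smul_mem' := fun c p hp => ⟨by simp [hp.1], fun j => by
    simpa [Polynomial.coeff_smul] using (𝓕.F j).smul_mem c (hp.2 j)⟩

theorem X_mem_Spos : (Polynomial.X : Polynomial A) ∈ 𝓕.Spos := by
  refine ⟨by simp, fun j => ?_⟩
  rcases j with _ | j
  · simpa using 𝓕.one_mem
  · simp [Polynomial.coeff_X]

theorem Spos_mul_right {u : Polynomial A} (hu : u ∈ 𝓕.Spos) (c : 𝓕.rees) :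
    u * (c : Polynomial A) ∈ 𝓕.Spos := by
  constructor
  · rw [Polynomial.mul_coeff_zero, hu.1, zero_mul]
  · intro j
    rw [Polynomial.coeff_mul]
    refine Submodule.sum_mem _ fun x hx => ?_
    have hxx := Finset.HasAntidiagonal.mem_antidiagonal.mp hx
    rcases x with ⟨x1, x2⟩
    rcases x1 with _ | a
    · simp only at hxx ⊢
      rw [hu.1, zero_mul]
      exact Submodule.zero_mem _
    · have h := 𝓕.mul_mem a x2 _ (hu.2 a) _ (c.2 x2)
      have h2 : a + x2 = j := by simp only at hxx; omega
      rwa [h2] at h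

theorem Spos_mul_left {u : Polynomial A} (hu : u ∈ 𝓕.Spos) (c : 𝓕.rees) :
    (c : Polynomial A) * u ∈ 𝓕.Spos := by
  constructor
  · rw [Polynomial.mul_coeff_zero, hu.1, mul_zero]
  · intro j
    rw [Polynomial.coeff_mul]
    refine Submodule.sum_mem _ fun x hx => ?_
    have hxx := Finset.HasAntidiagonal.mem_antidiagonal.mp hx
    rcases x with ⟨x1, x2⟩
    rcases x2 with _ | b
    · simp only at hxx ⊢
      rw [hu.1, mul_zero]
      exact Submodule.zero_mem _
    · have h := 𝓕.mul_mem x1 b _ (c.2 x1) _ (hu.2 b)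
      have h2 : x1 + b = j := by simp only at hxx; omega
      rwa [h2] at h

theorem rel_sub_mem {p q : 𝓕.rees}
    (h : RingQuot.Rel (fun a b : 𝓕.rees => a = 𝓕.xElem ∧ b = 0) p q) :
    (p : Polynomial A) - (q : Polynomial A) ∈ 𝓕.Spos := by
  induction h with
  | of h =>
      rcases h with ⟨rfl, rfl⟩
      simpa [xElem] using 𝓕.X_mem_Spos
  | add_left _ ih =>
      rename_i a b c _
      simpa [add_sub_add_right_eq_sub] using ih
  | mul_left _ ih =>
      rename_i a b c _
      have h := 𝓕.Spos_mul_right ih c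
      simpa [sub_mul] using h
  | mul_right _ ih =>
      rename_i a b c _
      have h := 𝓕.Spos_mul_left ih a
      simpa [mul_sub] using h

theorem eqvGen_sub_mem {p q : 𝓕.rees}
    (h : Relation.EqvGen (RingQuot.Rel (fun a b : 𝓕.rees => a = 𝓕.xElem ∧ b = 0)) p q) :
    (p : Polynomial A) - (q : Polynomial A) ∈ 𝓕.Spos := by
  induction h with
  | rel _ _ h => exact 𝓕.rel_sub_mem h
  | refl _ => simp
  | symm _ _ _ ih => simpa [neg_sub] using 𝓕.Spos.neg_mem ih
  | trans _ _ _ _ _ ih1 ih2 => simpa [sub_add_sub_cancel] using 𝓕.Spos.add_mem ih1 ih2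

theorem mem_Spos_of_grProj_eq_zero {p : 𝓕.rees} (h : 𝓕.grProj p = 0) :
    (p : Polynomial A) ∈ 𝓕.Spos := by
  have e : ∀ x : 𝓕.rees,
      RingQuot.mkRingHom (fun a b : 𝓕.rees => a = 𝓕.xElem ∧ b = 0) x = 𝓕.grProj x := by
    intro x
    rw [grProj, ← RingQuot.mkAlgHom_coe (S := k) (fun a b : 𝓕.rees => a = 𝓕.xElem ∧ b = 0)]
    rfl
  have h1 : RingQuot.mkRingHom (fun a b : 𝓕.rees => a = 𝓕.xElem ∧ b = 0) p
      = RingQuot.mkRingHom (fun a b : 𝓕.rees => a = 𝓕.xElem ∧ b = 0) 0 := by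
    rw [e p, e 0, map_zero, h]
  simp only [RingQuot.mkRingHom_def, RingHom.coe_mk, MonoidHom.coe_mk, OneHom.coe_mk] at h1
  have h2 : Quot.mk (RingQuot.Rel (fun a b : 𝓕.rees => a = 𝓕.xElem ∧ b = 0)) p
      = Quot.mk _ (0 : 𝓕.rees) := congrArg RingQuot.toQuot h1
  have h3 := Quot.eq.mp h2
  simpa using 𝓕.eqvGen_sub_mem h3

theorem grProj_monoMap_ne_zero_zero {a : A} (ha : a ∈ 𝓕.F 0) (h0 : a ≠ 0) :
    𝓕.grProj (𝓕.monoMap 0 ⟨a, ha⟩) ≠ 0 := by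
  intro h
  have h1 := (𝓕.mem_Spos_of_grProj_eq_zero h).1
  rw [monoMap_coe] at h1
  simp [Polynomial.coeff_monomial] at h1
  exact h0 h1

theorem grProj_monoMap_ne_zero' (j l : ℕ) (hjl : j + 1 = l) {a : A} (ha : a ∈ 𝓕.F l)
    (h0 : a ∉ 𝓕.F j) : 𝓕.grProj (𝓕.monoMap l ⟨a, ha⟩) ≠ 0 := by
  subst hjl
  intro h
  have h1 := (𝓕.mem_Spos_of_grProj_eq_zero h).2 j
  rw [monoMap_coe] at h1
  simp [Polynomial.coeff_monomial] at h1
  exact h0 h1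

theorem grProj_xElem : 𝓕.grProj 𝓕.xElem = 0 := by
  have h := RingQuot.mkAlgHom_rel (S := k)
    (s := fun a b : 𝓕.rees => a = 𝓕.xElem ∧ b = 0) ⟨rfl, rfl⟩
  exact h.trans (map_zero (RingQuot.mkAlgHom k (fun a b : 𝓕.rees => a = 𝓕.xElem ∧ b = 0)))

theorem grProj_monoMap_eq_zero' (j l : ℕ) (hjl : j + 1 = l) {a : A} (ha : a ∈ 𝓕.F j)
    (ha' : a ∈ 𝓕.F l) : 𝓕.grProj (𝓕.monoMap l ⟨a, ha'⟩) = 0 := by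
  subst hjl
  have key : 𝓕.monoMap (j + 1) ⟨a, ha'⟩ = 𝓕.xElem * 𝓕.monoMap j ⟨a, ha⟩ := by
    refine Subtype.ext ?_
    show (Polynomial.monomial (j + 1) a : Polynomial A) = Polynomial.X * Polynomial.monomial j a
    rw [← Polynomial.monomial_one_one_eq_X, Polynomial.monomial_mul_monomial, one_mul,
      add_comm]
  rw [key, map_mul, 𝓕.grProj_xElem, zero_mul]

theorem grProj_monoMap_mul (i j l : ℕ) (hl : i + j = l) {a b : A}
    (ha : a ∈ 𝓕.F i) (hb : b ∈ 𝓕.F j) (hab : a * b ∈ 𝓕.F l) :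
    𝓕.grProj (𝓕.monoMap i ⟨a, ha⟩) * 𝓕.grProj (𝓕.monoMap j ⟨b, hb⟩)
      = 𝓕.grProj (𝓕.monoMap l ⟨a * b, hab⟩) := by
  subst hl
  rw [← map_mul]
  congr 1
  refine Subtype.ext ?_
  show (Polynomial.monomial i a : Polynomial A) * Polynomial.monomial j b
      = Polynomial.monomial (i + j) (a * b)
  rw [Polynomial.monomial_mul_monomial]

theorem grProj_monoMap_pow (m : ℕ) {f : A} (hf : f ∈ 𝓕.F m) (s : ℕ) :
    ∀ (l : ℕ), s * m = l → ∀ (hl : f ^ s ∈ 𝓕.F l),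
      (𝓕.grProj (𝓕.monoMap m ⟨f, hf⟩)) ^ s = 𝓕.grProj (𝓕.monoMap l ⟨f ^ s, hl⟩) := by
  induction s with
  | zero =>
      intro l h0 hl
      have hl0 : l = 0 := by omega
      subst hl0
      rw [pow_zero]
      have hone : 𝓕.monoMap 0 ⟨f ^ 0, hl⟩ = 1 := by
        refine Subtype.ext ?_
        rw [monoMap_coe]
        show Polynomial.monomial 0 (f ^ 0) = 1
        rw [pow_zero, Polynomial.monomial_zero_one]
      rw [hone, map_one]
  | succ s ih =>
      intro l h0 hl
      have hsm : f ^ s ∈ 𝓕.F (s * m) := 𝓕.pow_mem_F hf s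
      have hmem : f ^ s * f ∈ 𝓕.F l := by rw [← pow_succ]; exact hl
      rw [pow_succ, ih (s * m) rfl hsm,
        𝓕.grProj_monoMap_mul (s * m) m l (by rw [← h0, Nat.succ_mul]) hsm hf hmem]
      have harg : (⟨f ^ s * f, hmem⟩ : 𝓕.F l) = ⟨f ^ (s + 1), hl⟩ :=
        Subtype.ext (pow_succ f s).symm
      rw [harg]

end AlgFiltration

end Prop13Aux

/-- Proposition 1.3: a domain `A` which is left integral over `u_good(A)` satisfies
`u_good(A) = A`; equivalently, the only good ℕ-filtration of `A` is the trivial one. -/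
theorem statement15 {k : Type v} [Field k]
    (A : Type u) [Ring A] [Algebra k A] [IsDomain A]
    (hint : ∀ f : A, ∃ (n : ℕ) (d : Fin (n + 1) → A),
      (∀ s, d s ∈ uGood k A) ∧ (∃ s, d s ≠ 0) ∧ ∑ s, d s * f ^ (s : ℕ) = 0) :
    uGood k A = ⊤ ∧ ∀ 𝓕 : AlgFiltration k A, IsDomain 𝓕.gr → 𝓕.F 0 = ⊤ := by
  have key : ∀ 𝓕 : AlgFiltration k A, IsDomain 𝓕.gr → 𝓕.F 0 = ⊤ := by
    intro 𝓕 hdom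
    haveI := hdom
    classical
    rw [Submodule.eq_top_iff']
    intro f
    by_contra hf0
    obtain ⟨n, d, hd, ⟨s0, hs0⟩, hsum⟩ := hint f
    have hule : uGood k A ≤ 𝓕.F 0 := by
      rw [uGood]
      exact iInf_le_of_le 𝓕 (iInf_le _ hdom)
    have hdF : ∀ s, d s ∈ 𝓕.F 0 := fun s => hule (hd s)
    -- the largest index with a nonzero coefficient
    set T : Finset (Fin (n + 1)) := Finset.univ.filter (fun s => d s ≠ 0) with hT
    have hTne : T.Nonempty := ⟨s0, by simp [hT, hs0]⟩
    set N := T.max' hTne with hN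
    have hdN : d N ≠ 0 := by
      have h := T.max'_mem hTne
      simp only [hT, Finset.mem_filter] at h
      exact h.2
    have hle : ∀ s, d s ≠ 0 → s ≤ N := fun s hs =>
      T.le_max' s (by simp [hT, hs])
    -- the minimal degree of f
    have hPex : ∃ m, f ∈ 𝓕.F m := 𝓕.exhaustive f
    set m := Nat.find hPex with hm
    have hfm : f ∈ 𝓕.F m := Nat.find_spec hPex
    have hm0 : m ≠ 0 := fun h => hf0 (h ▸ hfm)
    have hm1 : 1 ≤ m := Nat.one_le_iff_ne_zero.mpr hm0
    have hfm' : f ∉ 𝓕.F (m - 1) := Nat.find_min hPex (by omega)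
    -- N ≠ 0
    have hN0 : (N : ℕ) ≠ 0 := by
      intro h
      have hall : ∀ s : Fin (n + 1), s ≠ N → d s * f ^ (s : ℕ) = 0 := by
        intro s hs
        by_contra hds
        have hds' : d s ≠ 0 := fun h0 => hds (by rw [h0, zero_mul])
        have h1 := hle s hds'
        exact hs (le_antisymm h1 (by rw [Fin.le_def, h]; exact Nat.zero_le _))
      have hsum2 : (∑ s, d s * f ^ (s : ℕ)) = d N * f ^ (N : ℕ) :=
        Finset.sum_eq_single N (fun s _ hs => hall s hs) (by simp)
      rw [hsum] at hsum2
      rw [h, pow_zero, mul_one] at hsum2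
      exact hdN hsum2.symm
    -- the key membership
    have hsum' : d N * f ^ (N : ℕ) = -∑ s ∈ Finset.univ.erase N, d s * f ^ (s : ℕ) := by
      have h := Finset.add_sum_erase Finset.univ (fun s => d s * f ^ (s : ℕ))
        (Finset.mem_univ N)
      rw [hsum] at h
      exact eq_neg_of_add_eq_zero_left h
    have hmem : d N * f ^ (N : ℕ) ∈ 𝓕.F ((N : ℕ) * m - 1) := by
      rw [hsum']
      refine Submodule.neg_mem _ (Submodule.sum_mem _ fun s hs => ?_)
      by_cases hds : d s = 0
      · rw [hds, zero_mul]; exact Submodule.zero_mem _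
      · have hsN : (s : ℕ) < (N : ℕ) := by
          have h1 := hle s hds
          have h2 : s ≠ N := (Finset.mem_erase.mp hs).1
          exact lt_of_le_of_ne (Fin.le_def.mp h1) fun hh => h2 (Fin.ext hh)
        have hmem1 : d s * f ^ (s : ℕ) ∈ 𝓕.F (0 + (s : ℕ) * m) :=
          𝓕.mul_mem 0 _ _ (hdF s) _ (𝓕.pow_mem_F hfm (s : ℕ))
        refine 𝓕.F_le ?_ hmem1
        have h3 : ((N : ℕ) - 1) * m = (N : ℕ) * m - 1 * m := by
          rw [Nat.sub_mul]
        have h4 : (s : ℕ) * m ≤ ((N : ℕ) - 1) * m :=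
          Nat.mul_le_mul_right m (by omega)
        omega
    -- the graded computation
    have hpow : f ^ (N : ℕ) ∈ 𝓕.F ((N : ℕ) * m) := 𝓕.pow_mem_F hfm (N : ℕ)
    have hprod0 : d N * f ^ (N : ℕ) ∈ 𝓕.F (0 + (N : ℕ) * m) :=
      𝓕.mul_mem 0 _ _ (hdF N) _ hpow
    have hprod : d N * f ^ (N : ℕ) ∈ 𝓕.F ((N : ℕ) * m) := by
      rwa [Nat.zero_add] at hprod0
    have hmul := 𝓕.grProj_monoMap_mul 0 ((N : ℕ) * m) ((N : ℕ) * m) (by omega)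
      (hdF N) hpow hprod
    have hpoweq := 𝓕.grProj_monoMap_pow m hfm (N : ℕ) ((N : ℕ) * m) rfl hpow
    have hzero : 𝓕.grProj (𝓕.monoMap ((N : ℕ) * m) ⟨d N * f ^ (N : ℕ), hprod⟩) = 0 :=
      𝓕.grProj_monoMap_eq_zero' ((N : ℕ) * m - 1) ((N : ℕ) * m)
        (by have := Nat.one_le_iff_ne_zero.mpr (Nat.mul_ne_zero hN0 hm0); omega)
        hmem hprod
    have hfinal : 𝓕.grProj (𝓕.monoMap 0 ⟨d N, hdF N⟩) *
        (𝓕.grProj (𝓕.monoMap m ⟨f, hfm⟩)) ^ (N : ℕ) = 0 := by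
      rw [hpoweq, hmul, hzero]
    rcases mul_eq_zero.mp hfinal with h1 | h2
    · exact 𝓕.grProj_monoMap_ne_zero_zero (hdF N) hdN h1
    · have h3 : 𝓕.grProj (𝓕.monoMap m ⟨f, hfm⟩) = 0 :=
        (pow_eq_zero_iff hN0).mp h2
      exact 𝓕.grProj_monoMap_ne_zero' (m - 1) m (by omega) hfm hfm' h3
  refine ⟨?_, key⟩
  rw [uGood, eq_top_iff]
  exact le_iInf fun 𝓕 => le_iInf fun h => (key 𝓕 h).ge
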